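/- For r ≥ 2, the coefficient of k^{3r-2} in the polynomial f_r is -7/(12 (r-2)!), where f_r is the polynomial with f_r(k) equal to the coefficient of x^r in ∏_{j=1}^{k} (1 + j x)^j ∏_{j=k+1}^{2k} (1 + j x)^{2k-j}. -/

import Mathlib

open Polynomial

/-- The polynomial `∏_{j=1}^{k} (1 + j x)^j · ∏_{j=k+1}^{2k} (1 + j x)^{2k-j}` over ℚ. -/
noncomputable def genPoly (k : ℕ) : Polynomial ℚ :=
  (∏ j ∈ Finset.Icc 1 k, (1 + Polynomial.C (j : ℚ) * Polynomial.X) ^ j) *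
    ∏ j ∈ Finset.Icc (k + 1) (2 * k), (1 + Polynomial.C (j : ℚ) * Polynomial.X) ^ (2 * k - j)

open Finset

noncomputable def B (p : ℕ) : Polynomial ℚ :=
  ∑ i ∈ Finset.range (p + 1),
    Polynomial.C (_root_.bernoulli i * ((p + 1).choose i) / (p + 1)) * Polynomial.X ^ (p + 1 - i)

lemma B_eval (p n : ℕ) : (B p).eval (n : ℚ) = ∑ j ∈ Finset.range n, (j : ℚ) ^ p := by
  rw [sum_range_pow, B, eval_finset_sum]
  simp only [eval_mul, eval_C, eval_pow, eval_X]
  exact Finset.sum_congr rfl fun i _ => by push_cast; ring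

lemma B_deg (p : ℕ) : (B p).natDegree ≤ p + 1 := by
  rw [B]
  apply Polynomial.natDegree_sum_le_of_forall_le
  intro i _
  exact (natDegree_C_mul_le _ _).trans (by simp)

noncomputable def Pp (m : ℕ) : Polynomial ℚ :=
  (B (m + 1)).comp (X + 1)
    + (Polynomial.C 2 * X) * ((B m).comp (Polynomial.C 2 * X + 1) - (B m).comp (X + 1))
    - ((B (m + 1)).comp (Polynomial.C 2 * X + 1) - (B (m + 1)).comp (X + 1))

lemma Pp_deg (m : ℕ) : (Pp m).natDegree ≤ m + 2 := by
  have h1 : (X + 1 : Polynomial ℚ).natDegree ≤ 1 := by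
    simpa using natDegree_add_le (X : Polynomial ℚ) 1
  have h2 : (Polynomial.C 2 * X + 1 : Polynomial ℚ).natDegree ≤ 1 := by
    refine (natDegree_add_le _ _).trans ?_
    simpa using (natDegree_C_mul_le (2:ℚ) X)
  have hc : ∀ (p : Polynomial ℚ) (q : Polynomial ℚ), q.natDegree ≤ 1 →
      (p.comp q).natDegree ≤ p.natDegree := by
    intro p q hq
    refine (natDegree_comp_le).trans ?_
    calc p.natDegree * q.natDegree ≤ p.natDegree * 1 := Nat.mul_le_mul_left _ hq
      _ = p.natDegree := by ring
  refine (natDegree_sub_le _ _).trans (max_le ((natDegree_add_le _ _).trans (max_le ?_ ?_)) ?_)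
  · exact ((hc _ _ h1).trans (B_deg _)).trans (by omega)
  · refine (natDegree_mul_le).trans ?_
    have : (Polynomial.C 2 * X : Polynomial ℚ).natDegree ≤ 1 := by
      simpa using (natDegree_C_mul_le (2:ℚ) X)
    have h3 := (natDegree_sub_le ((B m).comp (Polynomial.C 2 * X + 1)) ((B m).comp (X + 1))).trans
      (max_le ((hc _ _ h2).trans (B_deg m)) ((hc _ _ h1).trans (B_deg m)))
    omega
  · refine (natDegree_sub_le _ _).trans (max_le ?_ ?_) <;>
      exact (((hc _ _ (by assumption)).trans (B_deg _)).trans (by omega))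

lemma Pp_eval (m k : ℕ) :
    (Pp m).eval (k : ℚ) = (∑ j ∈ Finset.Icc 1 k, (j : ℚ) ^ (m + 1))
      + ∑ j ∈ Finset.Icc (k + 1) (2 * k), ((2 * k - j : ℕ) : ℚ) * (j : ℚ) ^ m := by
  have e1 : ((k : ℚ) + 1) = ((k + 1 : ℕ) : ℚ) := by push_cast; ring
  have e2 : (2 * (k : ℚ) + 1) = ((2 * k + 1 : ℕ) : ℚ) := by push_cast; ring
  have hA : ∀ t : ℕ, 1 ≤ t → ∑ j ∈ Finset.range (k + 1), (j : ℚ) ^ t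
      = ∑ j ∈ Finset.Icc 1 k, (j : ℚ) ^ t := by
    intro t ht
    have : Finset.range (k + 1) = insert 0 (Finset.Icc 1 k) := by ext x; simp; omega
    rw [this, Finset.sum_insert (by simp)]
    simp [zero_pow (by omega : t ≠ 0)]
  have hsub : ∀ t : ℕ, ∑ j ∈ Finset.Icc (k + 1) (2 * k), (j : ℚ) ^ t
      = ∑ j ∈ Finset.range (2 * k + 1), (j : ℚ) ^ t
        - ∑ j ∈ Finset.range (k + 1), (j : ℚ) ^ t := by
    intro t
    rw [← Finset.Ico_add_one_right_eq_Icc, Finset.sum_Ico_eq_sub _ (by omega)]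
  have hcast : ∑ j ∈ Finset.Icc (k + 1) (2 * k), ((2 * k - j : ℕ) : ℚ) * (j : ℚ) ^ m
      = (2 * k : ℚ) * (∑ j ∈ Finset.Icc (k + 1) (2 * k), (j : ℚ) ^ m)
        - ∑ j ∈ Finset.Icc (k + 1) (2 * k), (j : ℚ) ^ (m + 1) := by
    rw [Finset.mul_sum, ← Finset.sum_sub_distrib]
    refine Finset.sum_congr rfl fun j hj => ?_
    have hj' := Finset.mem_Icc.mp hj
    rw [Nat.cast_sub (by omega)]
    push_cast
    ring
  rw [Pp]
  simp only [eval_add, eval_sub, eval_mul, eval_comp, eval_C, eval_X, eval_one]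
  rw [e1, e2]
  simp only [B_eval]
  rw [hcast, hsub m, hsub (m + 1), hA (m + 1) (by omega)]
  push_cast
  ring

lemma bernoulli_two' : _root_.bernoulli 2 = 1 / 6 := by
  rw [bernoulli_eq_bernoulli'_of_ne_one (by norm_num), bernoulli'_two]

lemma bernoulli_three' : _root_.bernoulli 3 = 0 := by
  rw [bernoulli_eq_bernoulli'_of_ne_one (by norm_num), bernoulli'_three]

lemma Pp_one : Pp 1 = X ^ 3 := by
  apply Polynomial.funext
  intro x
  simp only [Pp, B, eval_add, eval_sub, eval_mul, eval_comp, eval_C, eval_X, eval_one,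
    eval_pow, eval_finset_sum, Finset.sum_range_succ, Finset.sum_range_zero,
    _root_.bernoulli_zero, _root_.bernoulli_one, bernoulli_two', bernoulli_three']
  norm_num [Nat.choose, bernoulli_two', bernoulli_three']
  ring_nf

lemma Pp_two : Pp 2 = Polynomial.C (7/6) * X ^ 4 - Polynomial.C (1/6) * X ^ 2 := by
  apply Polynomial.funext
  intro x
  simp only [Pp, B, eval_add, eval_sub, eval_mul, eval_comp, eval_C, eval_X, eval_one,
    eval_pow, eval_finset_sum, Finset.sum_range_succ, Finset.sum_range_zero,
    _root_.bernoulli_zero, _root_.bernoulli_one, bernoulli_two', bernoulli_three']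
  norm_num [Nat.choose, bernoulli_two', bernoulli_three']
  ring_nf

lemma key (M : Multiset ℚ) : ∀ r : ℕ,
    ((r : ℚ) + 1) * ((M.map fun x => 1 + Polynomial.C x * X).prod.coeff (r + 1)) =
      ∑ i ∈ Finset.range (r + 1), (-1 : ℚ) ^ i * (M.map fun x => x ^ (i + 1)).sum *
        ((M.map fun x => 1 + Polynomial.C x * X).prod.coeff (r - i)) := by
  induction M using Multiset.induction_on with
  | empty => intro r; simp [Polynomial.coeff_one]
  | cons a M ih =>
    intro r
    set P := (M.map fun x => 1 + Polynomial.C x * X).prod with hPdef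
    have hco : ∀ n : ℕ,
        (((a ::ₘ M).map fun x => 1 + Polynomial.C x * X).prod).coeff n
          = P.coeff n + a * (X * P).coeff n := by
      intro n
      rw [Multiset.map_cons, Multiset.prod_cons]
      have h : (1 + Polynomial.C a * X) * P = P + Polynomial.C a * (X * P) := by ring
      rw [h, coeff_add, coeff_C_mul]
    have hsum : ∀ i : ℕ, ((a ::ₘ M).map fun x => x ^ (i + 1)).sum
        = a ^ (i + 1) + (M.map fun x => x ^ (i + 1)).sum := by
      intro i; rw [Multiset.map_cons, Multiset.sum_cons]
    have hw0 : (X * P).coeff 0 = 0 := by simp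
    have hw : ∀ n : ℕ, (X * P).coeff (n + 1) = P.coeff n := fun n => coeff_X_mul P n
    rw [hco (r + 1)]
    have step : ∀ i ∈ Finset.range (r + 1),
        (-1 : ℚ) ^ i * ((a ::ₘ M).map fun x => x ^ (i + 1)).sum
            * (((a ::ₘ M).map fun x => 1 + Polynomial.C x * X).prod).coeff (r - i)
        = ((-1 : ℚ) ^ i * (M.map fun x => x ^ (i + 1)).sum * P.coeff (r - i)
            + a * ((-1 : ℚ) ^ i * (M.map fun x => x ^ (i + 1)).sum * (X * P).coeff (r - i)))
          + ((-1 : ℚ) ^ i * a ^ (i + 1) * (X * P).coeff (r + 1 - i)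
             - (-1 : ℚ) ^ (i + 1) * a ^ (i + 1 + 1) * (X * P).coeff (r + 1 - (i + 1))) := by
      intro i hi
      have hi' : i ≤ r := by simpa [Nat.lt_succ_iff] using Finset.mem_range.mp hi
      rw [hco (r - i), hsum i]
      have h1 : r + 1 - i = (r - i) + 1 := by omega
      have h2 : r + 1 - (i + 1) = r - i := by omega
      rw [h1, h2, hw (r - i)]
      ring
    have tel : ∑ i ∈ Finset.range (r + 1),
        ((-1 : ℚ) ^ i * a ^ (i + 1) * (X * P).coeff (r + 1 - i)
          - (-1 : ℚ) ^ (i + 1) * a ^ (i + 1 + 1) * (X * P).coeff (r + 1 - (i + 1)))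
        = (-1 : ℚ) ^ 0 * a ^ (0 + 1) * (X * P).coeff (r + 1 - 0)
          - (-1 : ℚ) ^ (r + 1) * a ^ (r + 1 + 1) * (X * P).coeff (r + 1 - (r + 1)) :=
      Finset.sum_range_sub' (fun j => (-1 : ℚ) ^ j * a ^ (j + 1) * (X * P).coeff (r + 1 - j)) (r + 1)
    rw [Finset.sum_congr rfl step, Finset.sum_add_distrib, tel, Finset.sum_add_distrib]
    have hS1 : ∑ i ∈ Finset.range (r + 1),
        (-1 : ℚ) ^ i * (M.map fun x => x ^ (i + 1)).sum * P.coeff (r - i)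
        = ((r : ℚ) + 1) * P.coeff (r + 1) := (ih r).symm
    have hS2 : ∑ i ∈ Finset.range (r + 1),
        a * ((-1 : ℚ) ^ i * (M.map fun x => x ^ (i + 1)).sum * (X * P).coeff (r - i))
        = a * ((r : ℚ) * P.coeff r) := by
      rw [← Finset.mul_sum]
      congr 1
      cases r with
      | zero => simp [hw0]
      | succ s =>
        rw [Finset.sum_range_succ]
        have hstep2 : ∀ i ∈ Finset.range (s + 1),
            (-1 : ℚ) ^ i * (M.map fun x => x ^ (i + 1)).sum * (X * P).coeff (s + 1 - i)
            = (-1 : ℚ) ^ i * (M.map fun x => x ^ (i + 1)).sum * P.coeff (s - i) := by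
          intro i hi
          have hi' : i ≤ s := by simpa [Nat.lt_succ_iff] using Finset.mem_range.mp hi
          have h1 : s + 1 - i = (s - i) + 1 := by omega
          rw [show s + 1 - i = (s - i) + 1 from h1, hw]
        rw [Finset.sum_congr rfl hstep2, ← ih s]
        simp [hw0]
    rw [hS1, hS2]
    simp only [pow_zero, one_mul, Nat.sub_self, Nat.add_sub_cancel_left, hw0, mul_zero,
      Nat.sub_zero, hw r]
    ring

noncomputable def Mk (k : ℕ) : Multiset ℚ :=
  ((Finset.Icc 1 k).val.bind fun j => Multiset.replicate j (j : ℚ))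
    + ((Finset.Icc (k + 1) (2 * k)).val.bind fun j => Multiset.replicate (2 * k - j) (j : ℚ))

lemma genPoly_eq (k : ℕ) : genPoly k = ((Mk k).map fun x => 1 + Polynomial.C x * X).prod := by
  rw [genPoly, Mk]
  simp only [Multiset.map_add, Multiset.prod_add, Multiset.map_bind, Multiset.prod_bind,
    Multiset.map_replicate, Multiset.prod_replicate]
  rfl

lemma psum_eq (k m : ℕ) :
    ((Mk k).map fun x => x ^ m).sum = (Pp m).eval (k : ℚ) := by
  rw [Pp_eval, Mk]
  simp only [Multiset.map_add, Multiset.sum_add, Multiset.map_bind, Multiset.sum_bind,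
    Multiset.map_replicate, Multiset.sum_replicate]
  congr 1
  · show ∑ j ∈ Finset.Icc 1 k, j • ((j : ℚ) ^ m) = _
    refine Finset.sum_congr rfl fun j _ => ?_
    rw [nsmul_eq_mul, ← pow_succ']

noncomputable def F : ℕ → Polynomial ℚ
  | 0 => 1
  | (r + 1) => Polynomial.C (((r : ℚ) + 1)⁻¹) *
      ∑ i ∈ Finset.range (r + 1), Polynomial.C ((-1 : ℚ) ^ i) * (Pp (i + 1) * F (r - i))
  decreasing_by exact Nat.lt_succ_of_le (Nat.sub_le r i)

lemma F_eval (k : ℕ) : ∀ r : ℕ, (genPoly k).coeff r = (F r).eval (k : ℚ) := by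
  intro r
  induction r using Nat.strong_induction_on with
  | _ r ih =>
    match r with
    | 0 =>
      rw [F]
      simp only [eval_one, coeff_zero_eq_eval_zero, genPoly]
      simp [eval_prod]
    | (r + 1) =>
      have hkey := key (Mk k) r
      rw [← genPoly_eq] at hkey
      have hne : ((r : ℚ) + 1) ≠ 0 := by positivity
      rw [F]
      simp only [eval_mul, eval_C, eval_finset_sum, eval_mul, eval_C]
      rw [eq_comm, inv_mul_eq_iff_eq_mul₀ hne, hkey]
      refine Finset.sum_congr rfl fun i hi => ?_
      have hi' : i ≤ r := by simpa [Nat.lt_succ_iff] using Finset.mem_range.mp hi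
      rw [psum_eq, ← ih (r - i) (by omega)]
      ring

lemma F_deg : ∀ r : ℕ, (F r).natDegree ≤ 3 * r := by
  intro r
  induction r using Nat.strong_induction_on with
  | _ r ih =>
    match r with
    | 0 => rw [F]; simp
    | (r + 1) =>
      rw [F]
      refine (natDegree_C_mul_le _ _).trans ?_
      refine natDegree_sum_le_of_forall_le _ _ fun i hi => ?_
      have hi' : i ≤ r := by simpa [Nat.lt_succ_iff] using Finset.mem_range.mp hi
      refine (natDegree_C_mul_le _ _).trans (natDegree_mul_le.trans ?_)
      have h1 := Pp_deg (i + 1)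
      have h2 := ih (r - i) (by omega)
      omega

lemma F_top : ∀ r : ℕ, (F r).coeff (3 * r) = ((r.factorial : ℚ))⁻¹ := by
  intro r
  induction r with
  | zero => rw [F]; simp
  | succ r ih =>
    rw [F, coeff_C_mul, finset_sum_coeff]
    rw [Finset.sum_eq_single_of_mem 0 (by simp)]
    · rw [coeff_C_mul, Pp_one]
      have h3 : 3 * (r + 1) = 3 * r + 3 := by ring
      rw [h3, coeff_X_pow_mul, Nat.sub_zero, ih]
      rw [Nat.factorial_succ]
      push_cast
      rw [mul_inv]
      ring
    · intro i hi hine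
      have hi' : i ≤ r := by simpa [Nat.lt_succ_iff] using Finset.mem_range.mp hi
      rw [coeff_C_mul]
      rw [coeff_eq_zero_of_natDegree_lt, mul_zero]
      refine natDegree_mul_le.trans_lt ?_
      have h1 := Pp_deg (i + 1)
      have h2 := F_deg (r - i)
      omega

lemma Pp_two_coeff : (Pp 2).coeff 4 = 7 / 6 := by
  rw [Pp_two]
  simp [coeff_sub, coeff_C_mul, coeff_X_pow]

lemma F_step (s : ℕ) : (F (s + 2)).coeff (3 * s + 4)
    = ((s : ℚ) + 2)⁻¹ * ((F (s + 1)).coeff (3 * s + 1) - 7 / 6 * (F s).coeff (3 * s)) := by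
  show (F ((s + 1) + 1)).coeff (3 * s + 4) = _
  rw [F, coeff_C_mul, finset_sum_coeff]
  have hzero : ∀ i ∈ Finset.range (s + 2), 2 ≤ i →
      (Polynomial.C ((-1 : ℚ) ^ i) * (Pp (i + 1) * F (s + 1 - i))).coeff (3 * s + 4) = 0 := by
    intro i hi h2i
    have hi' : i ≤ s + 1 := by simpa [Nat.lt_succ_iff] using Finset.mem_range.mp hi
    rw [coeff_C_mul, coeff_eq_zero_of_natDegree_lt, mul_zero]
    refine natDegree_mul_le.trans_lt ?_
    have h1 := Pp_deg (i + 1)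
    have h2 := F_deg (s + 1 - i)
    omega
  rw [Finset.sum_range_succ', Finset.sum_range_succ']
  rw [Finset.sum_eq_zero (fun i hi => hzero (i + 1 + 1)
    (by simp only [Finset.mem_range] at hi ⊢; omega) (by omega))]
  simp only [zero_add, pow_zero, map_one, one_mul, pow_one, Nat.sub_zero]
  have e1 : s + 1 - (0 + 1) = s := by omega
  rw [e1, Pp_one]
  have e2 : 3 * s + 4 = (3 * s + 1) + 3 := by ring
  rw [e2, coeff_X_pow_mul]
  have e3 : (3 * s + 1) + 3 = 4 + 3 * s := by ring
  rw [e3, coeff_C_mul, coeff_mul_add_eq_of_natDegree_le (Pp_deg 2) (F_deg s), Pp_two_coeff]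
  have hc : (((s + 1 : ℕ) : ℚ) + 1) = ((s : ℚ) + 2) := by push_cast; ring
  rw [hc]
  ring

lemma F_D : ∀ s : ℕ, (F (s + 2)).coeff (3 * s + 4) = -7 / (12 * ((s.factorial : ℚ))) := by
  intro s
  induction s with
  | zero =>
    rw [F_step]
    have h1 : (F 1).coeff 1 = 0 := by
      rw [F]
      simp [Pp_one, F, coeff_X_pow]
    have h0 : (F 0).coeff 0 = 1 := by rw [F]; simp
    rw [h1, h0]
    norm_num
  | succ s ih =>
    rw [F_step]
    have e1 : 3 * (s + 1) + 1 = 3 * s + 4 := by ring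
    rw [e1, ih, F_top (s + 1)]
    have hs : ((s.factorial : ℚ)) ≠ 0 := by
      exact_mod_cast Nat.factorial_ne_zero s
    have hs1 : (((s + 1).factorial : ℚ)) ≠ 0 := by
      exact_mod_cast Nat.factorial_ne_zero (s + 1)
    rw [Nat.factorial_succ]
    push_cast
    have h2 : ((s : ℚ) + 1) ≠ 0 := by positivity
    have h3 : ((s : ℚ) + 1 + 2) ≠ 0 := by positivity
    field_simp
    ring

theorem stmt_14 (r : ℕ) (hr : 2 ≤ r) (f : Polynomial ℚ)
    (hdeg : f.natDegree = 3 * r)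
    (hval : ∀ k : ℕ, 0 < k → r ≤ k ^ 2 → (genPoly k).coeff r = f.eval (k : ℚ)) :
    f.coeff (3 * r - 2) = -7 / (12 * ((r - 2).factorial : ℚ)) := by
  have hfF : f = F r := by
    apply Polynomial.eq_of_infinite_eval_eq
    have himg : ((fun n : ℕ => (n : ℚ)) '' Set.Ici r).Infinite :=
      Set.Infinite.image (fun a _ b _ h => Nat.cast_injective h) (Set.Ici_infinite r)
    refine himg.mono ?_
    rintro x ⟨n, hn, rfl⟩
    have hn' : r ≤ n := hn
    have h0 : 0 < n := by omega
    have h2 : r ≤ n ^ 2 := le_trans hn' (by nlinarith)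
    have hv := hval n h0 h2
    have h3 := F_eval n r
    simp only [Set.mem_setOf_eq]
    rw [← hv, h3]
  obtain ⟨s, rfl⟩ : ∃ s, r = s + 2 := ⟨r - 2, by omega⟩
  have e1 : 3 * (s + 2) - 2 = 3 * s + 4 := by omega
  have e2 : s + 2 - 2 = s := by omega
  rw [hfF, e1, e2, F_D s]
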